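/- Let k ≥ 2, let N ≥ 1, and let w be a word of length N over a k-letter alphabet. Set r = ⌊log_k N⌋ and v = 1 + k + k^2 + ⋯ + k^r. Then sc(C(w)) ≤ 2v + N·(N − 2r − 1) + 1. -/

import Mathlib

/-- The state complexity of a language `L`: the number of distinct left
quotients `p⁻¹L = { s | p ++ s ∈ L }` as `p` ranges over all words (counting
the empty quotient if it occurs). -/
noncomputable def sc {α : Type*} (L : Set (List α)) : ℕ :=
  Set.ncard { Q : Set (List α) | ∃ p : List α, Q = { s | p ++ s ∈ L } }

/-- `conj w` is the set of all conjugates (cyclic shifts) of the word `w`. -/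
def conj {α : Type*} (w : List α) : Set (List α) :=
  { u | ∃ x y : List α, w = x ++ y ∧ u = y ++ x }

namespace StateComplexityAux

open Finset List

variable {k : ℕ}

/-- the finset of rotations of `w` -/
def Rt (w : List (Fin k)) : Finset (List (Fin k)) :=
  (Finset.range w.length).image w.rotate

/-- the finset of cyclic factors of length `ℓ` (prefixes of rotations) -/
def Fc (w : List (Fin k)) (ℓ : ℕ) : Finset (List (Fin k)) :=
  (Rt w).image (List.take ℓ)

/-- nonempty quotients whose generating word has length `ℓ` -/
def QS (w : List (Fin k)) (ℓ : ℕ) : Set (Set (List (Fin k))) :=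
  {Q | ∃ p : List (Fin k), p.length = ℓ ∧ Q = {s | p ++ s ∈ conj w} ∧ Q.Nonempty}

lemma mem_Rt {w u : List (Fin k)} : u ∈ Rt w ↔ ∃ i < w.length, w.rotate i = u := by
  simp [Rt]

lemma length_of_mem_Rt {w u : List (Fin k)} (h : u ∈ Rt w) : u.length = w.length := by
  rcases mem_Rt.1 h with ⟨i, -, rfl⟩
  exact List.length_rotate w i

lemma rotate_mem_Rt {w u : List (Fin k)} (hw : 0 < w.length) (h : u ∈ Rt w) (j : ℕ) :
    u.rotate j ∈ Rt w := by
  rcases mem_Rt.1 h with ⟨i, hi, rfl⟩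
  rw [List.rotate_rotate]
  exact mem_Rt.2 ⟨(i + j) % w.length, Nat.mod_lt _ hw, by rw [List.rotate_mod]⟩

lemma conj_eq_Rt (w : List (Fin k)) (hw : 0 < w.length) : conj w = ↑(Rt w) := by
  ext u
  constructor
  · rintro ⟨x, y, hxy, rfl⟩
    have hx : x.length ≤ w.length := by rw [hxy]; simp
    have h1 : w.rotate x.length = y ++ x := by
      rw [List.rotate_eq_drop_append_take hx, hxy, List.drop_left, List.take_left]
    have h2 : w.rotate (x.length % w.length) = y ++ x := by rwa [List.rotate_mod]
    exact Finset.mem_coe.2 (mem_Rt.2 ⟨x.length % w.length, Nat.mod_lt _ hw, h2⟩)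
  · intro h
    rcases mem_Rt.1 (Finset.mem_coe.1 h) with ⟨i, hi, rfl⟩
    exact ⟨w.take i, w.drop i, (List.take_append_drop i w).symm,
      (List.rotate_eq_drop_append_take hi.le)⟩

lemma drop_mem_Fc {w u : List (Fin k)} (hw : 0 < w.length) (h : u ∈ Rt w) {ℓ : ℕ}
    (hℓ : ℓ ≤ w.length) : u.drop ℓ ∈ Fc w (w.length - ℓ) := by
  have hu := length_of_mem_Rt h
  have h1 : (u.rotate ℓ).take (w.length - ℓ) = u.drop ℓ := by
    rw [List.rotate_eq_drop_append_take (hu ▸ hℓ)]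
    exact List.take_left' (by rw [List.length_drop, hu])
  rw [← h1]
  exact Finset.mem_image_of_mem _ (rotate_mem_Rt hw h ℓ)

lemma Rt_nonempty {w : List (Fin k)} (hw : 0 < w.length) : (Rt w).Nonempty :=
  ⟨w.rotate 0, Finset.mem_image_of_mem _ (Finset.mem_range.2 hw)⟩

lemma Fc_zero {w : List (Fin k)} (hw : 0 < w.length) : Fc w 0 = {([] : List (Fin k))} := by
  apply Finset.Subset.antisymm
  · intro x hx
    simp only [Fc, Finset.mem_image] at hx
    rcases hx with ⟨u, -, rfl⟩; simp
  · intro x hx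
    simp only [Finset.mem_singleton] at hx
    subst hx
    rcases Rt_nonempty hw with ⟨u, hu⟩
    exact Finset.mem_image.2 ⟨u, hu, by simp⟩

lemma card_Fc_zero {w : List (Fin k)} (hw : 0 < w.length) : (Fc w 0).card = 1 := by
  rw [Fc_zero hw]; simp

lemma Fc_eq_image {w : List (Fin k)} {a b : ℕ} (hab : a ≤ b) :
    Fc w a = (Fc w b).image (List.take a) := by
  unfold Fc
  rw [Finset.image_image]
  apply Finset.image_congr
  intro u _
  simp only [Function.comp_apply, List.take_take, Nat.min_eq_left hab]

lemma card_Fc_mono (w : List (Fin k)) {a b : ℕ} (hab : a ≤ b) :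
    (Fc w a).card ≤ (Fc w b).card := by
  rw [Fc_eq_image (w := w) hab]; exact Finset.card_image_le

lemma card_G_le (w : List (Fin k)) : (Rt w).card ≤ w.length :=
  le_trans Finset.card_image_le (by simp)

lemma Fc_length_eq : ∀ {w : List (Fin k)}, Fc w w.length = Rt w := by
  intro w
  unfold Fc
  have h1 : ∀ u ∈ Rt w, u.take w.length = u := by
    intro u hu
    rw [← length_of_mem_Rt hu]
    exact List.take_length
  calc (Rt w).image (List.take w.length) = (Rt w).image id := Finset.image_congr
        (by intro u hu; simp [h1 u hu])
    _ = Rt w := Finset.image_id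

lemma card_Fc_le_pow {w : List (Fin k)} (hk : 0 < k) {ℓ : ℕ} (hℓ : ℓ ≤ w.length) :
    (Fc w ℓ).card ≤ k ^ ℓ := by
  have hlen : ∀ x ∈ Fc w ℓ, x.length = ℓ := by
    intro x hx
    simp only [Fc, Finset.mem_image] at hx
    rcases hx with ⟨u, hu, rfl⟩
    rw [List.length_take, length_of_mem_Rt hu, Nat.min_eq_left hℓ]
  classical
  have h2 : (Fc w ℓ).card ≤ (Finset.univ : Finset (Fin ℓ → Fin k)).card := by
    apply Finset.card_le_card_of_injOn (fun x (i : Fin ℓ) => x.getD i.1 ⟨0, hk⟩)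
    · intro x _; exact Finset.mem_univ _
    · intro x hx y hy hxy
      apply List.ext_getElem (by rw [hlen x hx, hlen y hy])
      intro i h1 h2
      have hi : i < ℓ := by rwa [hlen x hx] at h1
      have := congrFun hxy ⟨i, hi⟩
      simpa [List.getD_eq_getElem?_getD, List.getElem?_eq_getElem, h1, h2] using this
  simpa [Fintype.card_fun] using h2

lemma take_rotate_one {u : List (Fin k)} {ℓ : ℕ} (hℓ : ℓ + 1 ≤ u.length) :
    (u.rotate 1).take ℓ = (u.take (ℓ + 1)).drop 1 := by
  rw [List.rotate_eq_drop_append_take (by omega : 1 ≤ u.length)]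
  rw [List.take_append_of_le_length (by rw [List.length_drop]; omega)]
  have h1 : ℓ + 1 = 1 + ℓ := by omega
  rw [h1, List.drop_take]
  simp

lemma grow {w : List (Fin k)} (hw : 0 < w.length) {ℓ : ℕ} (hℓ : ℓ < w.length)
    (h : (Fc w (ℓ + 1)).card ≤ (Fc w ℓ).card) : (Fc w ℓ).card = (Rt w).card := by
  classical
  have himg : Fc w ℓ = (Fc w (ℓ + 1)).image (List.take ℓ) := Fc_eq_image (by omega)
  have hcard : ((Fc w (ℓ + 1)).image (List.take ℓ)).card = (Fc w (ℓ + 1)).card :=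
    le_antisymm Finset.card_image_le (by rw [← himg] at *; exact h.trans (le_of_eq rfl))
  have hinj : Set.InjOn (List.take ℓ) (↑(Fc w (ℓ + 1)) : Set (List (Fin k))) := Finset.injOn_of_card_image_eq hcard
  have step2 : ∀ u ∈ Rt w, ∀ v ∈ Rt w, u.take ℓ = v.take ℓ →
      u.take (ℓ + 1) = v.take (ℓ + 1) := by
    intro u hu v hv huv
    apply hinj (Finset.mem_coe.2 (Finset.mem_image_of_mem _ hu))
      (Finset.mem_coe.2 (Finset.mem_image_of_mem _ hv))
    rw [List.take_take, List.take_take]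
    simpa [Nat.min_eq_left (by omega : ℓ ≤ ℓ + 1)] using huv
  have prop : ∀ t, ∀ u ∈ Rt w, ∀ v ∈ Rt w, u.take ℓ = v.take ℓ →
      (u.rotate t).take (ℓ + 1) = (v.rotate t).take (ℓ + 1) := by
    intro t
    induction t with
    | zero => intro u hu v hv huv; simpa [List.rotate_zero] using step2 u hu v hv huv
    | succ t ih =>
      intro u hu v hv huv
      have h1 := ih u hu v hv huv
      have hu' := rotate_mem_Rt hw hu t
      have hv' := rotate_mem_Rt hw hv t
      have h2 : ((u.rotate t).rotate 1).take ℓ = ((v.rotate t).rotate 1).take ℓ := by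
        rw [take_rotate_one (by rw [length_of_mem_Rt hu']; omega),
            take_rotate_one (by rw [length_of_mem_Rt hv']; omega), h1]
      have h3 := step2 _ (rotate_mem_Rt hw hu' 1) _ (rotate_mem_Rt hw hv' 1) h2
      rwa [List.rotate_rotate, List.rotate_rotate] at h3
  have hext : ∀ u ∈ Rt w, ∀ v ∈ Rt w, u.take ℓ = v.take ℓ → u = v := by
    intro u hu v hv huv
    have hlu := length_of_mem_Rt hu
    have hlv := length_of_mem_Rt hv
    apply List.ext_getElem (by omega)
    intro t h1 h2
    have h3 := prop t u hu v hv huv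
    have e1 : ((u.rotate t).take (ℓ + 1))[0]'(by
        rw [List.length_take, List.length_rotate]; omega) = u[t]'h1 := by
      rw [List.getElem_take, List.getElem_rotate]
      congr 1
      simp [Nat.mod_eq_of_lt (by omega : t < u.length)]
    have e2 : ((v.rotate t).take (ℓ + 1))[0]'(by
        rw [List.length_take, List.length_rotate]; omega) = v[t]'h2 := by
      rw [List.getElem_take, List.getElem_rotate]
      congr 1
      simp [Nat.mod_eq_of_lt (by omega : t < v.length)]
    rw [← e1, ← e2]
    congr 1
  have hinj2 : Set.InjOn (List.take ℓ) (↑(Rt w) : Set (List (Fin k))) := by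
    intro u hu v hv huv
    exact hext u (Finset.mem_coe.1 hu) v (Finset.mem_coe.1 hv) huv
  unfold Fc
  exact Finset.card_image_of_injOn hinj2

/-- lower bound on circular factor complexity -/
lemma c_low {w : List (Fin k)} (hw : 0 < w.length) :
    ∀ ℓ, ℓ ≤ w.length → min (ℓ + 1) (Rt w).card ≤ (Fc w ℓ).card := by
  intro ℓ
  induction ℓ with
  | zero =>
    intro _
    have h1 : 1 ≤ (Rt w).card := Finset.card_pos.2 (Rt_nonempty hw)
    rw [card_Fc_zero hw]; omega
  | succ ℓ ih =>
    intro hℓ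
    have ihh := ih (by omega)
    by_cases hcG : (Rt w).card ≤ (Fc w ℓ).card
    · have := card_Fc_mono w (by omega : ℓ ≤ ℓ + 1)
      omega
    · push_neg at hcG
      have hne : ¬ ((Fc w (ℓ + 1)).card ≤ (Fc w ℓ).card) := by
        intro hcc
        exact absurd (grow hw (by omega) hcc) (by omega)
      push_neg at hne
      omega

/-- key identity : quotient as image of a fiber -/
lemma quot_eq (w : List (Fin k)) (hw : 0 < w.length) (p : List (Fin k)) :
    {s | p ++ s ∈ conj w} =
      List.drop p.length '' {u | u ∈ Rt w ∧ u.take p.length = p} := by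
  ext s
  simp only [Set.mem_setOf_eq, Set.mem_image, conj_eq_Rt w hw, Finset.mem_coe]
  constructor
  · intro h
    exact ⟨p ++ s, ⟨h, List.take_left' rfl⟩, List.drop_left' rfl⟩
  · rintro ⟨u, ⟨hu, htake⟩, rfl⟩
    have hx : p ++ u.drop p.length = u := by
      nth_rewrite 1 [← htake]
      exact List.take_append_drop _ u
    rw [hx]
    exact hu

/-- generic fiber counting -/
lemma fiber_count {β γ : Type*} [DecidableEq β] [DecidableEq γ] (s : Finset β) (f : β → γ) :
    ((s.image f).filter (fun b => 2 ≤ (s.filter (fun a => f a = b)).card)).card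
      + (s.image f).card ≤ s.card := by
  classical
  rw [Finset.card_eq_sum_card_image f s]
  have h1 : ∀ b ∈ s.image f,
      (1 : ℕ) + (if 2 ≤ (s.filter (fun a => f a = b)).card then 1 else 0)
        ≤ (s.filter (fun a => f a = b)).card := by
    intro b hb
    rcases Finset.mem_image.1 hb with ⟨a, ha, rfl⟩
    have hpos : 0 < (s.filter (fun x => f x = f a)).card :=
      Finset.card_pos.2 ⟨a, Finset.mem_filter.2 ⟨ha, rfl⟩⟩
    split <;> omega
  calc ((s.image f).filter (fun b => 2 ≤ (s.filter (fun a => f a = b)).card)).card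
        + (s.image f).card
      = ∑ b ∈ s.image f,
          ((1 : ℕ) + (if 2 ≤ (s.filter (fun a => f a = b)).card then 1 else 0)) := by
        rw [Finset.sum_add_distrib]
        simp [Finset.sum_boole, add_comm]
    _ ≤ ∑ b ∈ s.image f, (s.filter (fun a => f a = b)).card := Finset.sum_le_sum h1

lemma QS_finite (w : List (Fin k)) (hw : 0 < w.length) (ℓ : ℕ) : (QS w ℓ).Finite := by
  apply Set.Finite.subset (Set.Finite.image (fun p => {s | p ++ s ∈ conj w})
    (Fc w ℓ).finite_toSet)
  rintro Q ⟨p, hp, rfl, ⟨s, hs⟩⟩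
  have hs' : p ++ s ∈ Rt w := by rwa [conj_eq_Rt w hw] at hs
  refine ⟨p, ?_, rfl⟩
  have h1 : (p ++ s).take ℓ = p := List.take_left' hp
  exact h1 ▸ Finset.mem_coe.2 (Finset.mem_image_of_mem _ hs')

lemma QS_card1 (w : List (Fin k)) (hw : 0 < w.length) (ℓ : ℕ) :
    (QS w ℓ).ncard ≤ (Fc w ℓ).card := by
  have hsub : QS w ℓ ⊆ (fun p => {s | p ++ s ∈ conj w}) '' ↑(Fc w ℓ) := by
    rintro Q ⟨p, hp, rfl, ⟨s, hs⟩⟩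
    have hs' : p ++ s ∈ Rt w := by rwa [conj_eq_Rt w hw] at hs
    refine ⟨p, ?_, rfl⟩
    have h1 : (p ++ s).take ℓ = p := List.take_left' hp
    exact h1 ▸ Finset.mem_coe.2 (Finset.mem_image_of_mem _ hs')
  calc (QS w ℓ).ncard ≤ ((fun p => {s | p ++ s ∈ conj w}) '' ↑(Fc w ℓ)).ncard :=
        Set.ncard_le_ncard hsub (Set.Finite.image _ (Fc w ℓ).finite_toSet)
    _ ≤ (↑(Fc w ℓ) : Set (List (Fin k))).ncard := Set.ncard_image_le (Fc w ℓ).finite_toSet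
    _ = (Fc w ℓ).card := Set.ncard_coe_finset _

lemma QS_card2 (w : List (Fin k)) (hw : 0 < w.length) {ℓ : ℕ} (hℓ : ℓ ≤ w.length) :
    (QS w ℓ).ncard ≤ (Fc w (w.length - ℓ)).card + ((Rt w).card - (Fc w ℓ).card) := by
  classical
  set A : Set (Set (List (Fin k))) :=
    (fun s => ({s} : Set (List (Fin k)))) '' ↑(Fc w (w.length - ℓ)) with hA
  set F2 : Finset (List (Fin k)) :=
    (Fc w ℓ).filter (fun p => 2 ≤ ((Rt w).filter (fun u => u.take ℓ = p)).card) with hF2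
  set B : Set (Set (List (Fin k))) :=
    (fun p => List.drop ℓ '' {u | u ∈ Rt w ∧ u.take ℓ = p}) '' ↑F2 with hB
  have hsub : QS w ℓ ⊆ A ∪ B := by
    rintro Q ⟨p, hp, rfl, hne⟩
    have hQ : {s | p ++ s ∈ conj w} = List.drop ℓ '' {u | u ∈ Rt w ∧ u.take ℓ = p} := by
      have h0 := quot_eq w hw p
      rwa [hp] at h0
    have hfibne : ∃ u, u ∈ Rt w ∧ u.take ℓ = p := by
      rcases hne with ⟨s, hs⟩
      rw [hQ] at hs
      rcases hs with ⟨u, hu, -⟩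
      exact ⟨u, hu⟩
    rcases hfibne with ⟨u₀, hu₀, htake₀⟩
    have hpF : p ∈ Fc w ℓ := htake₀ ▸ Finset.mem_image_of_mem _ hu₀
    by_cases h2 : 2 ≤ ((Rt w).filter (fun u => u.take ℓ = p)).card
    · right
      exact ⟨p, Finset.mem_coe.2 (Finset.mem_filter.2 ⟨hpF, h2⟩), hQ.symm⟩
    · left
      have hc1 : ((Rt w).filter (fun u => u.take ℓ = p)).card = 1 := by
        have hpos : 0 < ((Rt w).filter (fun u => u.take ℓ = p)).card :=
          Finset.card_pos.2 ⟨u₀, Finset.mem_filter.2 ⟨hu₀, htake₀⟩⟩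
        omega
      rcases Finset.card_eq_one.1 hc1 with ⟨u1, hu1⟩
      have husing : {v | v ∈ Rt w ∧ v.take ℓ = p} = {u1} := by
        ext v1
        constructor
        · rintro ⟨h1, h2'⟩
          have hm : v1 ∈ (Rt w).filter (fun x => x.take ℓ = p) := Finset.mem_filter.2 ⟨h1, h2'⟩
          rw [hu1] at hm
          simpa using hm
        · intro hv
          rw [Set.mem_singleton_iff] at hv
          subst hv
          have hm : v1 ∈ (Rt w).filter (fun x => x.take ℓ = p) := by rw [hu1]; simp
          exact ⟨(Finset.mem_filter.1 hm).1, (Finset.mem_filter.1 hm).2⟩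
      have huRt : u1 ∈ Rt w := by
        have hm : u1 ∈ (Rt w).filter (fun x => x.take ℓ = p) := by rw [hu1]; simp
        exact (Finset.mem_filter.1 hm).1
      refine ⟨u1.drop ℓ, Finset.mem_coe.2 (drop_mem_Fc hw huRt hℓ), ?_⟩
      rw [hQ, husing]
      simp
  have hAcard : A.ncard ≤ (Fc w (w.length - ℓ)).card := by
    calc A.ncard ≤ (↑(Fc w (w.length - ℓ)) : Set (List (Fin k))).ncard :=
          Set.ncard_image_le (Finset.finite_toSet _)
      _ = _ := Set.ncard_coe_finset _
  have hBcard : B.ncard ≤ F2.card := by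
    calc B.ncard ≤ (↑F2 : Set (List (Fin k))).ncard := Set.ncard_image_le (Finset.finite_toSet _)
      _ = F2.card := Set.ncard_coe_finset _
  have hF2card : F2.card + (Fc w ℓ).card ≤ (Rt w).card := fiber_count (Rt w) (List.take ℓ)
  have hfinA : A.Finite := Set.Finite.image _ (Finset.finite_toSet _)
  have hfinB : B.Finite := Set.Finite.image _ (Finset.finite_toSet _)
  calc (QS w ℓ).ncard ≤ (A ∪ B).ncard := Set.ncard_le_ncard hsub (hfinA.union hfinB)
    _ ≤ A.ncard + B.ncard := Set.ncard_union_le _ _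
    _ ≤ (Fc w (w.length - ℓ)).card + ((Rt w).card - (Fc w ℓ).card) := by omega

lemma ncard_biUnion_le {α : Type*} (f : ℕ → Set α) (M : ℕ) :
    (⋃ i ∈ Finset.range M, f i).ncard ≤ ∑ i ∈ Finset.range M, (f i).ncard := by
  induction M with
  | zero => simp
  | succ M ih =>
    rw [Finset.range_add_one, Finset.sum_insert (by simp)]
    have h1 : (⋃ i ∈ insert M (Finset.range M), f i) = f M ∪ ⋃ i ∈ Finset.range M, f i := by
      simp [Set.biUnion_insert]
    rw [h1]
    calc (f M ∪ ⋃ i ∈ Finset.range M, f i).ncard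
        ≤ (f M).ncard + (⋃ i ∈ Finset.range M, f i).ncard := Set.ncard_union_le _ _
      _ ≤ (f M).ncard + ∑ i ∈ Finset.range M, (f i).ncard := by omega

lemma conj_length {α : Type*} {w u : List α} (h : u ∈ conj w) : u.length = w.length := by
  rcases h with ⟨x, y, rfl, rfl⟩
  simp [add_comm]

lemma sc_le_sum (w : List (Fin k)) (hw : 0 < w.length) :
    sc (conj w) ≤ 1 + ∑ ℓ ∈ Finset.range (w.length + 1), (QS w ℓ).ncard := by
  have hsub : { Q : Set (List (Fin k)) | ∃ p : List (Fin k), Q = { s | p ++ s ∈ conj w } }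
      ⊆ insert ∅ (⋃ ℓ ∈ Finset.range (w.length + 1), QS w ℓ) := by
    rintro Q ⟨p, rfl⟩
    by_cases hne : {s | p ++ s ∈ conj w}.Nonempty
    · rcases hne with ⟨s, hs⟩
      have hlen : p.length + s.length = w.length := by
        have := conj_length hs
        simpa using this
      right
      exact Set.mem_biUnion (show p.length ∈ Finset.range (w.length + 1) from
        Finset.mem_range.2 (by omega)) ⟨p, rfl, rfl, ⟨s, hs⟩⟩
    · left
      rw [Set.not_nonempty_iff_eq_empty] at hne
      exact hne
  have hfinU : (⋃ ℓ ∈ Finset.range (w.length + 1), QS w ℓ).Finite :=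
    Set.Finite.biUnion (Finset.finite_toSet _) (fun ℓ _ => QS_finite w hw ℓ)
  calc sc (conj w)
      ≤ (insert ∅ (⋃ ℓ ∈ Finset.range (w.length + 1), QS w ℓ)).ncard :=
        Set.ncard_le_ncard hsub (hfinU.insert _)
    _ ≤ (⋃ ℓ ∈ Finset.range (w.length + 1), QS w ℓ).ncard + 1 := Set.ncard_insert_le _ _
    _ ≤ (∑ ℓ ∈ Finset.range (w.length + 1), (QS w ℓ).ncard) + 1 := by
        have := ncard_biUnion_le (QS w) (w.length + 1)
        omega
    _ = _ := by omega

lemma three_mul_le_three_pow : ∀ j : ℕ, 3 * j ≤ 3 ^ j := by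
  intro j
  induction j with
  | zero => simp
  | succ j ih =>
    have h1 : (1:ℕ) ≤ 3 ^ j := Nat.one_le_pow _ _ (by norm_num)
    have h2 : 3 ^ (j+1) = 3 * 3 ^ j := by ring
    omega

lemma three_mul_le_two_pow : ∀ j : ℕ, 4 ≤ j → 3 * j ≤ 2 ^ j := by
  intro j
  induction j with
  | zero => omega
  | succ j ih =>
    intro hj
    rcases Nat.lt_or_ge j 4 with h | h
    · interval_cases j <;> revert hj <;> norm_num
    · have := ih (by omega)
      have h1 : (4:ℕ) ≤ 2 ^ j := by
        calc (4:ℕ) = 2^2 := by norm_num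
        _ ≤ 2^j := Nat.pow_le_pow_right (by norm_num) (by omega)
      have h2 : 2 ^ (j+1) = 2 * 2 ^ j := by ring
      omega

lemma arith (k' n G r : ℕ) (hk : 2 ≤ k') (hn : 1 ≤ n) (c q : ℕ → ℕ)
    (hr : r = Nat.log k' n)
    (hGn : G ≤ n) (hc0 : c 0 = 1) (hcN : c n = G)
    (hmono : ∀ a b : ℕ, a ≤ b → c a ≤ c b)
    (hpow : ∀ ℓ : ℕ, ℓ ≤ n → c ℓ ≤ k' ^ ℓ)
    (hlow : ∀ ℓ : ℕ, ℓ ≤ n → min (ℓ + 1) G ≤ c ℓ)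
    (hq1 : ∀ ℓ : ℕ, q ℓ ≤ c ℓ)
    (hq2 : ∀ ℓ : ℕ, ℓ ≤ n → q ℓ ≤ c (n - ℓ) + (G - c ℓ)) :
    ∑ ℓ ∈ Finset.range (n + 1), q ℓ
      ≤ 2 * (∑ i ∈ Finset.range (r + 1), k' ^ i) + n * (n - 2 * r - 1) := by
  have hkr : k' ^ r ≤ n := by
    rw [hr]; exact Nat.pow_log_le_self k' (by omega)
  have h2r : 2 ^ r ≤ k' ^ r := Nat.pow_le_pow_left hk r
  have hrltn : r < n := by
    have := Nat.lt_two_pow_self (n := r)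
    omega
  rcases Nat.eq_zero_or_pos r with hr0 | hrpos
  · subst hr0
    have hqn : q n ≤ 1 := by
      have e := hq2 n le_rfl
      rw [Nat.sub_self, hc0, hcN] at e
      omega
    have hq0 : q 0 ≤ 1 := by have := hq1 0; omega
    have hmid : ∀ ℓ ∈ Finset.Ico 1 n, q ℓ ≤ n := by
      intro ℓ hℓ
      have h1 := hq1 ℓ
      have h2 := hmono ℓ n (by simp at hℓ; omega)
      omega
    have hs1 : ∑ ℓ ∈ Finset.range (n + 1), q ℓ
        = q 0 + (∑ ℓ ∈ Finset.Ico 1 n, q ℓ) + q n := by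
      rw [Finset.sum_range_succ]
      congr 1
      rw [Finset.range_eq_Ico, Finset.sum_eq_sum_Ico_succ_bot hn]
    have hs2 : ∑ ℓ ∈ Finset.Ico 1 n, q ℓ ≤ (n - 1) * n := by
      calc ∑ ℓ ∈ Finset.Ico 1 n, q ℓ ≤ ∑ _ℓ ∈ Finset.Ico 1 n, n := Finset.sum_le_sum hmid
        _ = (n - 1) * n := by rw [Finset.sum_const, Nat.card_Ico, smul_eq_mul]
    have hrhs : 2 * (∑ i ∈ Finset.range (0 + 1), k' ^ i) + n * (n - 2 * 0 - 1)
        = 2 + n * (n - 1) := by simp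
    rw [hs1, hrhs]
    have h3 : (n - 1) * n = n * (n - 1) := Nat.mul_comm _ _
    omega
  · rcases Nat.lt_or_ge n (3 * r) with hn3 | hn3
    · -- exceptional small cases : k' = 2, (r,n) ∈ {(1,2),(2,4),(2,5),(3,8)}
      have hk2 : k' = 2 := by
        by_contra hne
        have hk3 : 3 ≤ k' := by omega
        have h1 : 3 ^ r ≤ k' ^ r := Nat.pow_le_pow_left hk3 r
        have := three_mul_le_three_pow r
        omega
      subst hk2
      have hrle3 : r ≤ 3 := by
        by_contra hgt
        have := three_mul_le_two_pow r (by omega)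
        omega
      interval_cases r
      · have hn2 : n = 2 := by omega
        subst hn2
        have e0 := hq1 0
        have e1 := hq1 1
        have e1' := hpow 1 (by omega)
        have e2 := hq2 2 le_rfl
        simp only [Finset.sum_range_succ, Finset.sum_range_zero] at *
        norm_num at *
        omega
      · have hn45 : n = 4 ∨ n = 5 := by omega
        rcases hn45 with rfl | rfl
        · have e0 := hq1 0
          have e1 := hq1 1
          have e1' := hpow 1 (by omega)
          have e2 := hq1 2
          have e2' := hpow 2 (by omega)
          have e3 := hq2 3 (by omega)
          have e3l := hlow 3 (by omega)
          have e34 := hmono 3 4 (by omega)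
          have e4 := hq2 4 le_rfl
          simp only [Finset.sum_range_succ, Finset.sum_range_zero] at *
          norm_num at *
          omega
        · have e0 := hq1 0
          have e1 := hq1 1
          have e1' := hpow 1 (by omega)
          have e2 := hq1 2
          have e2' := hpow 2 (by omega)
          have e3 := hq1 3
          have e3'' := hq2 3 (by omega)
          have e3l := hlow 3 (by omega)
          have e35 := hmono 3 5 (by omega)
          have e4 := hq2 4 (by omega)
          have e4l := hlow 4 (by omega)
          have e45 := hmono 4 5 (by omega)
          have e5 := hq2 5 le_rfl
          simp only [Finset.sum_range_succ, Finset.sum_range_zero] at *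
          norm_num at *
          omega
      · have hn8 : n = 8 := by omega
        subst hn8
        have e0 := hq1 0
        have e1 := hq1 1
        have e1' := hpow 1 (by omega)
        have e2 := hq1 2
        have e2' := hpow 2 (by omega)
        have e3 := hq1 3
        have e3' := hpow 3 (by omega)
        have e4 := hq1 4
        have e46 := hmono 4 6 (by omega)
        have e5 := hq1 5
        have e58 := hmono 5 8 (by omega)
        have e6 := hq1 6
        have e6'' := hq2 6 (by omega)
        have e6l := hlow 6 (by omega)
        have e68 := hmono 6 8 (by omega)
        have e7 := hq2 7 (by omega)
        have e7l := hlow 7 (by omega)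
        have e78 := hmono 7 8 (by omega)
        have e8 := hq2 8 le_rfl
        simp only [Finset.sum_range_succ, Finset.sum_range_zero] at *
        norm_num at *
        omega
    · -- main case : n ≥ 3r, r ≥ 1
      have h2r1 : 2 * r + 1 ≤ n := by omega
      set v := ∑ i ∈ Finset.range (r + 1), k' ^ i with hv
      set c' := c (n - r - 1) with hc'
      set D := G - c' with hD
      have hc'G : c' ≤ G := by
        rw [hc', ← hcN]; exact hmono _ _ (by omega)
      have hsplit : ∑ ℓ ∈ Finset.range (n + 1), q ℓ
          = (∑ ℓ ∈ Finset.Ico 0 (r + 1), q ℓ) + (∑ ℓ ∈ Finset.Ico (r + 1) (n - r), q ℓ)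
            + (∑ ℓ ∈ Finset.Ico (n - r) (n + 1), q ℓ) := by
        rw [Finset.range_eq_Ico,
          ← Finset.sum_Ico_consecutive q (by omega : 0 ≤ r + 1) (by omega : r + 1 ≤ n + 1),
          ← Finset.sum_Ico_consecutive q (by omega : r + 1 ≤ n - r) (by omega : n - r ≤ n + 1)]
        ring
      have hS1 : ∑ ℓ ∈ Finset.Ico 0 (r + 1), q ℓ ≤ v := by
        rw [hv, Finset.range_eq_Ico]
        apply Finset.sum_le_sum
        intro ℓ hℓ
        simp only [Finset.mem_Ico] at hℓ
        exact (hq1 ℓ).trans (hpow ℓ (by omega))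
      have hS2 : ∑ ℓ ∈ Finset.Ico (r + 1) (n - r), q ℓ ≤ (n - 2 * r - 1) * c' := by
        calc ∑ ℓ ∈ Finset.Ico (r + 1) (n - r), q ℓ
            ≤ ∑ _ℓ ∈ Finset.Ico (r + 1) (n - r), c' := by
              apply Finset.sum_le_sum
              intro ℓ hℓ
              simp only [Finset.mem_Ico] at hℓ
              exact (hq1 ℓ).trans (hmono ℓ (n - r - 1) (by omega))
          _ = (n - 2 * r - 1) * c' := by
              rw [Finset.sum_const, Nat.card_Ico, smul_eq_mul]
              congr 1
              omega
      have hS3a : ∑ ℓ ∈ Finset.Ico (n - r) (n + 1), (k' ^ (n - ℓ)) = v := by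
        rw [hv]
        apply Finset.sum_nbij' (fun ℓ => n - ℓ) (fun m => n - m)
        · intro a ha
          simp only [Finset.mem_Ico] at ha
          simp only [Finset.mem_range]
          omega
        · intro b hb
          simp only [Finset.mem_range] at hb
          simp only [Finset.mem_Ico]
          omega
        · intro a ha
          simp only [Finset.mem_Ico] at ha
          omega
        · intro b hb
          simp only [Finset.mem_range] at hb
          omega
        · intro a _
          rfl
      have hS3 : ∑ ℓ ∈ Finset.Ico (n - r) (n + 1), q ℓ ≤ v + (r - 1) * D := by
        have step1 : ∑ ℓ ∈ Finset.Ico (n - r) (n + 1), q ℓ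
            ≤ ∑ ℓ ∈ Finset.Ico (n - r) (n + 1), (k' ^ (n - ℓ) + (G - c ℓ)) := by
          apply Finset.sum_le_sum
          intro ℓ hℓ
          simp only [Finset.mem_Ico] at hℓ
          have h1 := hq2 ℓ (by omega)
          have h2 : c (n - ℓ) ≤ k' ^ (n - ℓ) := hpow _ (by omega)
          omega
        have step2 : ∑ ℓ ∈ Finset.Ico (n - r) (n + 1), (k' ^ (n - ℓ) + (G - c ℓ))
            = v + ∑ ℓ ∈ Finset.Ico (n - r) (n + 1), (G - c ℓ) := by
          rw [Finset.sum_add_distrib, hS3a]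
        have step3 : ∑ ℓ ∈ Finset.Ico (n - r) (n + 1), (G - c ℓ) ≤ (r - 1) * D := by
          rw [← Finset.sum_Ico_consecutive _ (by omega : n - r ≤ n - 1)
            (by omega : n - 1 ≤ n + 1)]
          have part2 : ∑ ℓ ∈ Finset.Ico (n - 1) (n + 1), (G - c ℓ) = 0 := by
            apply Finset.sum_eq_zero
            intro ℓ hℓ
            simp only [Finset.mem_Ico] at hℓ
            have h1 : min (ℓ + 1) G ≤ c ℓ := hlow ℓ (by omega)
            have h2 : min (ℓ + 1) G = G := by omega
            omega
          have part1 : ∑ ℓ ∈ Finset.Ico (n - r) (n - 1), (G - c ℓ) ≤ (r - 1) * D := by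
            calc ∑ ℓ ∈ Finset.Ico (n - r) (n - 1), (G - c ℓ)
                ≤ ∑ _ℓ ∈ Finset.Ico (n - r) (n - 1), D := by
                  apply Finset.sum_le_sum
                  intro ℓ hℓ
                  simp only [Finset.mem_Ico] at hℓ
                  have := hmono (n - r - 1) ℓ (by omega)
                  omega
              _ = (r - 1) * D := by
                  rw [Finset.sum_const, Nat.card_Ico, smul_eq_mul]
                  congr 1
                  omega
          omega
        omega
      have hkey : (n - 2 * r - 1) * c' + (r - 1) * D ≤ n * (n - 2 * r - 1) := by
        have h1 : (r - 1) * D ≤ (n - 2 * r - 1) * D :=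
          Nat.mul_le_mul_right _ (by omega)
        have h2 : (n - 2 * r - 1) * c' + (n - 2 * r - 1) * D = (n - 2 * r - 1) * (c' + D) := by
          ring
        have h3 : c' + D ≤ n := by omega
        have h4 : (n - 2 * r - 1) * (c' + D) ≤ (n - 2 * r - 1) * n :=
          Nat.mul_le_mul_left _ h3
        have h5 : (n - 2 * r - 1) * n = n * (n - 2 * r - 1) := Nat.mul_comm _ _
        omega
      omega

end StateComplexityAux

theorem stmt_9 (k N : ℕ) (hk : 2 ≤ k) (hN : 1 ≤ N)
    (w : List (Fin k)) (hw : w.length = N)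
    (r v : ℕ) (hr : r = Nat.log k N)
    (hv : v = ∑ i ∈ Finset.range (r + 1), k ^ i) :
    sc (conj w) ≤ 2 * v + N * (N - 2 * r - 1) + 1 := by
  subst hw hv
  open StateComplexityAux in
  have hwpos : 0 < w.length := hN
  have h1 := sc_le_sum w hwpos
  have h2 := arith k w.length (Rt w).card r hk hN
    (fun ℓ => (Fc w ℓ).card) (fun ℓ => (QS w ℓ).ncard) hr
    (card_G_le w) (card_Fc_zero hwpos) (by show (Fc w w.length).card = (Rt w).card; rw [Fc_length_eq])
    (fun a b hab => card_Fc_mono w hab)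
    (fun ℓ hℓ => card_Fc_le_pow (by omega) hℓ)
    (c_low hwpos)
    (fun ℓ => QS_card1 w hwpos ℓ)
    (fun ℓ hℓ => QS_card2 w hwpos hℓ)
  beta_reduce at h2
  omega
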